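/- With the definitions and assumptions in the context, let ℓ ∈ {1,…,ν} and x_0 ∈ S̄_{*_ℓ}. Then: (a) for all t ≥ T, φ_ℓ(x_0, t) ∈ S_{b_ℓ}; and (b) for all i ∈ {0,1,…,N}, φ_ℓ(x_0, i·T_s) ∈ S̄_{*_ℓ} ⊆ S̄_*. -/

import Mathlib

open Set

/-- With `ν` backup semiflows `φ_j` on `ℝ^n`, safe set `S_s = {h_s ≥ 0}`,
backup safe sets `S_{b_j} = {h_{b_j} ≥ 0} ⊆ S_s` forward invariant under `φ_j`, `T_s = T/N`,
`h̄_{*_j}(x) = min{h_{b_j}(φ_j(x,N·T_s)), min_{i∈{0,…,N}} h_s(φ_j(x,i·T_s))}`,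
`h̄_*(x) = max_j h̄_{*_j}(x)`, `S̄_{*_j} = {x : h̄_{*_j}(x) ≥ 0}`, and
`S̄_* = {x : h̄_*(x) ≥ 0}`: if `ℓ ∈ {1,…,ν}` and `x₀ ∈ S̄_{*_ℓ}`, then (a) for all `t ≥ T`,
`φ_ℓ(x₀,t) ∈ S_{b_ℓ}`, and (b) for all `i ∈ {0,1,…,N}`,
`φ_ℓ(x₀, i·T_s) ∈ S̄_{*_ℓ} ⊆ S̄_*`. -/
theorem multi_backup_SbarStar_sample_invariance
    (n ν : ℕ) (hn : 0 < n) (hν : 0 < ν)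
    (hs : EuclideanSpace ℝ (Fin n) → ℝ)
    (Ss : Set (EuclideanSpace ℝ (Fin n)))
    (hSs : Ss = {x | 0 ≤ hs x})
    (φ : Fin ν → EuclideanSpace ℝ (Fin n) → ℝ → EuclideanSpace ℝ (Fin n))
    (hφ0 : ∀ j x, φ j x 0 = x)
    (hφadd : ∀ (j : Fin ν) (x : EuclideanSpace ℝ (Fin n)) (s t : ℝ), 0 ≤ s → 0 ≤ t →
      φ j x (s + t) = φ j (φ j x s) t)
    (hb : Fin ν → EuclideanSpace ℝ (Fin n) → ℝ)
    (Sb : Fin ν → Set (EuclideanSpace ℝ (Fin n)))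
    (hSb : ∀ j, Sb j = {x | 0 ≤ hb j x})
    (hsub : ∀ j, Sb j ⊆ Ss)
    (hinv : ∀ j, ∀ x ∈ Sb j, ∀ t : ℝ, 0 ≤ t → φ j x t ∈ Sb j)
    (T : ℝ) (hT : 0 < T)
    (N : ℕ) (hN : 0 < N) (Ts : ℝ) (hTs : Ts = T / N)
    (hbarStarj : Fin ν → EuclideanSpace ℝ (Fin n) → ℝ)
    (hhbarStarj : ∀ j x, hbarStarj j x =
      min (hb j (φ j x ((N : ℝ) * Ts)))
        ((Finset.range (N + 1)).inf' Finset.nonempty_range_add_one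
          (fun i => hs (φ j x ((i : ℝ) * Ts)))))
    (hbarStar : EuclideanSpace ℝ (Fin n) → ℝ)
    (hhbarStar : ∀ x, hbarStar x =
      Finset.univ.sup' ⟨⟨0, hν⟩, Finset.mem_univ _⟩ (fun j => hbarStarj j x))
    (SbarStarj : Fin ν → Set (EuclideanSpace ℝ (Fin n)))
    (hSbarStarj : ∀ j, SbarStarj j = {x | 0 ≤ hbarStarj j x})
    (SbarStar : Set (EuclideanSpace ℝ (Fin n)))
    (hSbarStar : SbarStar = {x | 0 ≤ hbarStar x})
    (ℓ : Fin ν)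
    (x₀ : EuclideanSpace ℝ (Fin n)) (hx₀ : x₀ ∈ SbarStarj ℓ) :
    (∀ t : ℝ, T ≤ t → φ ℓ x₀ t ∈ Sb ℓ) ∧
    (∀ i : ℕ, i ≤ N → φ ℓ x₀ ((i : ℝ) * Ts) ∈ SbarStarj ℓ) ∧
    SbarStarj ℓ ⊆ SbarStar := by
  have hTs0 : 0 < Ts := by
    rw [hTs]; positivity
  have hNTs : (N : ℝ) * Ts = T := by
    rw [hTs]; field_simp
  -- unpack hx₀
  have hx₀' : 0 ≤ hbarStarj ℓ x₀ := by rwa [hSbarStarj, Set.mem_setOf_eq] at hx₀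
  rw [hhbarStarj] at hx₀'
  have hbT : 0 ≤ hb ℓ (φ ℓ x₀ T) := by
    have := le_min_iff.mp hx₀' |>.1
    rwa [hNTs] at this
  have hsamp : ∀ i : ℕ, i ≤ N → 0 ≤ hs (φ ℓ x₀ ((i : ℝ) * Ts)) := by
    intro i hi
    have h2 := le_min_iff.mp hx₀' |>.2
    exact le_trans h2 (Finset.inf'_le _ (Finset.mem_range.mpr (Nat.lt_succ_of_le hi)))
  -- part (a)
  have parta : ∀ t : ℝ, T ≤ t → φ ℓ x₀ t ∈ Sb ℓ := by
    intro t ht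
    have hφT : φ ℓ x₀ T ∈ Sb ℓ := by rw [hSb]; exact hbT
    have : φ ℓ x₀ t = φ ℓ (φ ℓ x₀ T) (t - T) := by
      rw [← hφadd ℓ x₀ T (t - T) hT.le (by linarith)]; ring_nf
    rw [this]
    exact hinv ℓ _ hφT _ (by linarith)
  -- all samples are in Ss
  have hsampAll : ∀ m : ℕ, 0 ≤ hs (φ ℓ x₀ ((m : ℝ) * Ts)) := by
    intro m
    by_cases hm : m ≤ N
    · exact hsamp m hm
    · push_neg at hm
      have hmem : φ ℓ x₀ ((m : ℝ) * Ts) ∈ Sb ℓ := by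
        apply parta
        rw [← hNTs]
        have : (N : ℝ) ≤ (m : ℝ) := by exact_mod_cast hm.le
        nlinarith
      have := hsub ℓ hmem
      rwa [hSs, Set.mem_setOf_eq] at this
  have combine : ∀ (i k : ℕ), φ ℓ (φ ℓ x₀ ((i : ℝ) * Ts)) ((k : ℝ) * Ts)
      = φ ℓ x₀ (((i + k : ℕ) : ℝ) * Ts) := by
    intro i k
    rw [← hφadd ℓ x₀ _ _ (by positivity) (by positivity)]
    congr 1
    push_cast; ring
  refine ⟨parta, ?_, ?_⟩
  · intro i hi
    rw [hSbarStarj, Set.mem_setOf_eq, hhbarStarj]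
    refine le_min ?_ ?_
    · rw [combine]
      have hmem : φ ℓ x₀ (((i + N : ℕ) : ℝ) * Ts) ∈ Sb ℓ := by
        apply parta
        rw [← hNTs]
        have : (N : ℝ) ≤ ((i + N : ℕ) : ℝ) := by push_cast; linarith [Nat.cast_nonneg (α := ℝ) i]
        nlinarith
      rwa [hSb, Set.mem_setOf_eq] at hmem
    · apply Finset.le_inf'
      intro k hk
      rw [combine]
      exact hsampAll (i + k)
  · intro x hx
    rw [hSbarStarj, Set.mem_setOf_eq] at hx
    rw [hSbarStar, Set.mem_setOf_eq, hhbarStar]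
    exact le_trans hx (Finset.le_sup' (fun j => hbarStarj j x) (Finset.mem_univ ℓ))
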